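/- Let X be a compact Hausdorff space. Then X is Eberlein compact if and only if there exist a cardinal κ and a family (a_α)_{α<κ} of elements of C(X, ℂ) such that: (1) 0 ≤ a_α ≤ 1 for every α (in the canonical order on self-adjoint elements); (2) for every character φ of C(X, ℂ) (unital star-algebra homomorphism C(X, ℂ) → ℂ) and every ε > 0 the set {α < κ : |φ(a_α)| > ε} is finite; (3) the smallest closed star-subalgebra of C(X, ℂ) containing 1 and all a_α is C(X, ℂ) itself. -/

import Mathlib

open scoped ComplexOrder

/-- A topological space is Eberlein compact if it is compact Hausdorff and embeds into some
Tychonoff cube `[0,1]^ι` in such a way that for every point `x` and every `ε > 0` only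
finitely many coordinates of `x` exceed `ε`. -/
def IsEberleinCompact (X : Type u) [TopologicalSpace X] : Prop :=
  CompactSpace X ∧ T2Space X ∧
    ∃ (ι : Type u) (e : X → (ι → Set.Icc (0:ℝ) 1)), Topology.IsEmbedding e ∧
      ∀ x : X, ∀ ε : ℝ, 0 < ε → {ξ : ι | ε < (e x ξ : ℝ)}.Finite

/-- Every star algebra hom `C(X, ℂ) →⋆ₐ[ℂ] ℂ` is evaluation at a point. -/
lemma starAlgHom_eq_eval (X : Type u) [TopologicalSpace X] [CompactSpace X] [T2Space X]
    (φ : C(X, ℂ) →⋆ₐ[ℂ] ℂ) : ∃ x : X, ∀ f : C(X, ℂ), φ f = f x := by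
  obtain ⟨x, hx⟩ := (WeakDual.CharacterSpace.continuousMapEval_bijective X ℂ).2
    (WeakDual.CharacterSpace.equivAlgHom.symm φ.toAlgHom)
  refine ⟨x, fun f => ?_⟩
  have h : (WeakDual.CharacterSpace.continuousMapEval X ℂ x : C(X, ℂ) → ℂ) f =
      (WeakDual.CharacterSpace.equivAlgHom.symm φ.toAlgHom : C(X, ℂ) → ℂ) f := by rw [hx]
  rw [WeakDual.CharacterSpace.equivAlgHom_symm_coe] at h
  exact h.symm

/-- A compact Hausdorff space `X` is Eberlein compact iff there is a family `(a i)` in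
`C(X, ℂ)` with `0 ≤ a i ≤ 1`, such that for every character `φ` of `C(X, ℂ)` and every
`ε > 0` the set `{i | |φ (a i)| > ε}` is finite, and such that `1` together with the `a i`
generates `C(X, ℂ)` as a closed star-subalgebra. -/
theorem stmt_5 (X : Type u) [TopologicalSpace X] [CompactSpace X] [T2Space X] :
    IsEberleinCompact X ↔
      ∃ (ι : Type u) (a : ι → C(X, ℂ)),
        (∀ i, 0 ≤ a i ∧ a i ≤ 1) ∧
        (∀ φ : C(X, ℂ) →⋆ₐ[ℂ] ℂ, ∀ ε : ℝ, 0 < ε →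
          {i : ι | ε < ‖φ (a i)‖}.Finite) ∧
        (StarAlgebra.adjoin ℂ (Set.range a)).topologicalClosure = ⊤ := by
  constructor
  · rintro ⟨_, _, ι, e, he, hfin⟩
    refine ⟨ι, fun i => ⟨fun x => ((e x i : ℝ) : ℂ),
      Complex.continuous_ofReal.comp (continuous_subtype_val.comp
        ((continuous_apply i).comp he.continuous))⟩, ?_, ?_, ?_⟩
    · intro i
      constructor
      · intro x
        exact Complex.zero_le_real.mpr (e x i).2.1
      · intro x
        show ((e x i : ℝ) : ℂ) ≤ ((1 : ℝ) : ℂ)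
        exact Complex.real_le_real.mpr (e x i).2.2
    · intro φ ε hε
      obtain ⟨x, hx⟩ := starAlgHom_eq_eval X φ
      refine Set.Finite.subset (hfin x ε hε) ?_
      intro i hi
      simp only [Set.mem_setOf_eq, hx, ContinuousMap.coe_mk] at hi ⊢
      rwa [Complex.norm_real, Real.norm_eq_abs, abs_of_nonneg (e x i).2.1] at hi
    · apply ContinuousMap.starSubalgebra_topologicalClosure_eq_top_of_separatesPoints
      intro x y hxy
      have hexy : e x ≠ e y := fun h => hxy (he.injective h)
      obtain ⟨i, hi⟩ : ∃ i, e x i ≠ e y i := by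
        by_contra h; push_neg at h; exact hexy (funext h)
      refine ⟨_, ⟨_, StarAlgebra.subset_adjoin ℂ _ ⟨i, rfl⟩, rfl⟩, ?_⟩
      simp only [ContinuousMap.coe_mk, Ne, Complex.ofReal_inj]
      exact fun h => hi (Subtype.ext h)
  · rintro ⟨ι, a, hle, hfin, hgen⟩
    have h0 : ∀ i x, (0 : ℂ) ≤ a i x := fun i x => by
      simpa using ContinuousMap.le_def.mp (hle i).1 x
    have h1 : ∀ i x, a i x ≤ (1 : ℂ) := fun i x => by
      simpa using ContinuousMap.le_def.mp (hle i).2 x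
    have hre0 : ∀ i x, 0 ≤ (a i x).re := fun i x => (Complex.le_def.mp (h0 i x)).1
    have hre1 : ∀ i x, (a i x).re ≤ 1 := fun i x => (Complex.le_def.mp (h1 i x)).1
    have haim : ∀ i x, (a i x).im = 0 := fun i x => ((Complex.le_def.mp (h0 i x)).2).symm
    have habs : ∀ i x, ‖a i x‖ = (a i x).re := fun i x => by
      have : a i x = ((a i x).re : ℂ) := Complex.ext rfl (by simp [haim])
      rw [this, Complex.norm_real, Real.norm_eq_abs, abs_of_nonneg (hre0 i x)]; simp
    refine ⟨inferInstance, inferInstance, ι,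
      fun x i => ⟨(a i x).re, hre0 i x, hre1 i x⟩, ?_, ?_⟩
    · -- embedding
      have hcont : Continuous fun x : X => fun i : ι =>
          (⟨(a i x).re, hre0 i x, hre1 i x⟩ : Set.Icc (0:ℝ) 1) :=
        continuous_pi fun i =>
          Continuous.subtype_mk (Complex.continuous_re.comp (a i).continuous) _
      have hinj : Function.Injective fun x : X => fun i : ι =>
          (⟨(a i x).re, hre0 i x, hre1 i x⟩ : Set.Icc (0:ℝ) 1) := by
        intro x y hxy
        have hval : ∀ i, a i x = a i y := by
          intro i
          have hre : (a i x).re = (a i y).re := congrArg Subtype.val (congrFun hxy i)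
          exact Complex.ext hre (by rw [haim, haim])
        have hall : ∀ f : C(X, ℂ), f x = f y := by
          intro f
          have hf : f ∈ (StarAlgebra.adjoin ℂ (Set.range a)).topologicalClosure := by
            rw [hgen]; trivial
          have hsub : ((StarAlgebra.adjoin ℂ (Set.range a)) : Set C(X, ℂ)) ⊆
              {g : C(X, ℂ) | g x = g y} := by
            intro g hg
            induction hg using StarAlgebra.adjoin_induction with
            | mem g hg => obtain ⟨i, rfl⟩ := hg; exact hval i
            | algebraMap c => rfl
            | add g h _ _ hgm hhm => simp only [Set.mem_setOf_eq] at *; simp [hgm, hhm]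
            | mul g h _ _ hgm hhm => simp only [Set.mem_setOf_eq] at *; simp [hgm, hhm]
            | star g _ hgm => simp only [Set.mem_setOf_eq] at *; simp [hgm]
          have hclosed : IsClosed {g : C(X, ℂ) | g x = g y} :=
            isClosed_eq (ContinuousEvalConst.continuous_eval_const x)
              (ContinuousEvalConst.continuous_eval_const y)
          exact closure_minimal hsub hclosed hf
        by_contra hne
        obtain ⟨f, hfx, hfy, -⟩ := exists_continuous_zero_one_of_isClosed
          (isClosed_singleton (x := x)) (isClosed_singleton (x := y))
          (Set.disjoint_singleton.mpr hne)
        have hx0 : (f x : ℝ) = 0 := hfx rfl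
        have hy1 : (f y : ℝ) = 1 := hfy rfl
        have := hall ((⟨fun t => ((t : ℝ) : ℂ), Complex.continuous_ofReal⟩ : C(ℝ, ℂ)).comp f)
        simp only [ContinuousMap.comp_apply, ContinuousMap.coe_mk, hx0, hy1] at this
        norm_num at this
      exact (hcont.isClosedEmbedding hinj).isEmbedding
    · -- finiteness of coordinates
      intro x ε hε
      refine Set.Finite.subset (hfin (ContinuousMap.evalStarAlgHom ℂ ℂ x) ε hε) ?_
      intro i hi
      simp only [Set.mem_setOf_eq] at hi ⊢
      rw [ContinuousMap.evalStarAlgHom_apply, habs]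
      exact hi
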